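/- If f is a continuous, strictly decreasing function on [1,∞) that is regularly varying at infinity with index −γ for some γ > 0, then f is invertible on its range and the function y ↦ f⁻¹(1/y) is regularly varying at infinity with index 1/γ. -/

import Mathlib

open Filter

/-- A positive function `f` is regularly varying at infinity with index `ρ` if
`f (λx)/f x → λ^ρ` as `x → ∞`, for every `λ > 0`. -/
def RegularlyVarying (f : ℝ → ℝ) (ρ : ℝ) : Prop :=
  ∀ lam : ℝ, 0 < lam → Tendsto (fun x => f (lam * x) / f x) atTop (nhds (lam ^ ρ))

theorem stmt0 (f : ℝ → ℝ) (γ : ℝ) (hγ : 0 < γ)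
    (hcont : ContinuousOn f (Set.Ici 1))
    (hanti : StrictAntiOn f (Set.Ici 1))
    (hpos : ∀ x ∈ Set.Ici (1:ℝ), 0 < f x)
    (hrv : RegularlyVarying f (-γ)) :
    ∃ g : ℝ → ℝ, (∀ x ∈ Set.Ici (1:ℝ), g (f x) = x) ∧
      RegularlyVarying (fun y => g (1 / y)) (1 / γ) := by
  classical
  have hinj : Set.InjOn f (Set.Ici 1) := hanti.injOn
  set g := Function.invFunOn f (Set.Ici 1) with hgdef
  have hleft : ∀ x ∈ Set.Ici (1:ℝ), g (f x) = x := fun x hx =>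
    hinj.leftInvOn_invFunOn hx
  -- f takes arbitrarily small values
  have hsmall : ∀ t : ℝ, 0 < t → ∃ x, 1 ≤ x ∧ f x < t := by
    intro t ht
    have h2 := hrv 2 two_pos
    have hclt1 : (2:ℝ) ^ (-γ : ℝ) < 1 :=
      Real.rpow_lt_one_of_one_lt_of_neg one_lt_two (neg_neg_iff_pos.mpr hγ)
    have hc0 : (0:ℝ) < (2:ℝ) ^ (-γ : ℝ) := Real.rpow_pos_of_pos two_pos _
    set c' : ℝ := ((2:ℝ) ^ (-γ : ℝ) + 1) / 2 with hc'def
    have hc'0 : 0 < c' := by rw [hc'def]; linarith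
    have hc'1 : c' < 1 := by rw [hc'def]; linarith
    have hcc' : (2:ℝ) ^ (-γ : ℝ) < c' := by rw [hc'def]; linarith
    have hev : ∀ᶠ x in atTop, f (2 * x) / f x < c' := h2.eventually_lt_const hcc'
    obtain ⟨X, hX⟩ := eventually_atTop.1 (hev.and (eventually_ge_atTop 1))
    set X1 : ℝ := max X 1 with hX1def
    have hX1ge : 1 ≤ X1 := le_max_right _ _
    have hX1X : X ≤ X1 := le_max_left _ _
    have key : ∀ n : ℕ, f (2 ^ n * X1) ≤ c' ^ n * f X1 := by
      intro n
      induction n with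
      | zero => simp
      | succ n ih =>
        have hx1 : (1:ℝ) ≤ 2 ^ n * X1 := by
          have : (1:ℝ) ≤ 2 ^ n := one_le_pow₀ one_le_two
          nlinarith
        have hxX : X ≤ 2 ^ n * X1 := by
          have : (1:ℝ) ≤ 2 ^ n := one_le_pow₀ one_le_two
          nlinarith
        have hfx : 0 < f (2 ^ n * X1) := hpos _ hx1
        have hr := (hX _ hxX).1
        have h1 : f (2 * (2 ^ n * X1)) < c' * f (2 ^ n * X1) :=
          (div_lt_iff₀ hfx).1 hr
        have h2' : (2:ℝ) ^ (n + 1) * X1 = 2 * (2 ^ n * X1) := by ring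
        calc f (2 ^ (n + 1) * X1) = f (2 * (2 ^ n * X1)) := by rw [h2']
          _ ≤ c' * f (2 ^ n * X1) := h1.le
          _ ≤ c' * (c' ^ n * f X1) := by
              exact mul_le_mul_of_nonneg_left ih hc'0.le
          _ = c' ^ (n + 1) * f X1 := by ring
    have htend : Tendsto (fun n : ℕ => c' ^ n * f X1) atTop (nhds 0) := by
      have := (tendsto_pow_atTop_nhds_zero_of_lt_one hc'0.le hc'1).mul_const (f X1)
      simpa using this
    obtain ⟨n, hn⟩ := (htend.eventually_lt_const ht).exists
    refine ⟨2 ^ n * X1, ?_, lt_of_le_of_lt (key n) hn⟩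
    have : (1:ℝ) ≤ 2 ^ n := one_le_pow₀ one_le_two
    nlinarith
  -- surjectivity onto (0, f 1]
  have hsurj : ∀ t : ℝ, 0 < t → t ≤ f 1 → ∃ x, 1 ≤ x ∧ f x = t := by
    intro t ht htf
    obtain ⟨X, hX1, hXt⟩ := hsmall t ht
    have hcont' : ContinuousOn f (Set.Icc 1 X) :=
      hcont.mono (Set.Icc_subset_Ici_self)
    have : t ∈ Set.Icc (f X) (f 1) := ⟨hXt.le, htf⟩
    obtain ⟨x, hx, hfx⟩ := intermediate_value_Icc' hX1 hcont' this
    exact ⟨x, hx.1, hfx⟩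
  have hgmem : ∀ t : ℝ, 0 < t → t ≤ f 1 → (1 ≤ g t ∧ f (g t) = t) := by
    intro t ht htf
    obtain ⟨x, hx, hfx⟩ := hsurj t ht htf
    have := hleft x hx
    rw [hfx] at this
    rw [this]
    exact ⟨hx, hfx⟩
  -- order lemmas for g
  have hlt : ∀ a : ℝ, 1 ≤ a → ∀ t : ℝ, 0 < t → t ≤ f 1 → (f a < t ↔ g t < a) := by
    intro a ha t ht htf
    obtain ⟨hg1, hgf⟩ := hgmem t ht htf
    have h := hanti.lt_iff_gt ha hg1
    rwa [hgf] at h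
  have hlt2 : ∀ a : ℝ, 1 ≤ a → ∀ t : ℝ, 0 < t → t ≤ f 1 → (t < f a ↔ a < g t) := by
    intro a ha t ht htf
    obtain ⟨hg1, hgf⟩ := hgmem t ht htf
    have h := hanti.lt_iff_gt hg1 ha
    rwa [hgf] at h
  -- g (1/y) → ∞
  have hinv0 : Tendsto (fun y : ℝ => 1 / y) atTop (nhds 0) := by
    simpa [one_div] using tendsto_inv_atTop_zero
  have hf1pos : 0 < f 1 := hpos 1 Set.self_mem_Ici
  have hev1 : ∀ᶠ y in atTop, 0 < 1 / y ∧ 1 / y ≤ f 1 := by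
    filter_upwards [eventually_gt_atTop 0, hinv0.eventually_lt_const hf1pos] with y hy hy2
    exact ⟨by positivity, hy2.le⟩
  have hX : Tendsto (fun y : ℝ => g (1 / y)) atTop atTop := by
    rw [tendsto_atTop]
    intro M
    set M' : ℝ := max M 1 with hM'def
    have hM'1 : 1 ≤ M' := le_max_right _ _
    have hfM' : 0 < f M' := hpos _ hM'1
    filter_upwards [hev1, hinv0.eventually_lt_const hfM'] with y hy hy2
    have := (hlt2 M' hM'1 _ hy.1 hy.2).1 hy2
    exact le_trans (le_max_left M 1) this.le
  refine ⟨g, hleft, ?_⟩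
  intro lam hlam
  set μ : ℝ := lam ^ (1 / γ) with hμdef
  have hμpos : 0 < μ := Real.rpow_pos_of_pos hlam _
  have hμγ : μ ^ (-γ : ℝ) = 1 / lam := by
    rw [hμdef, ← Real.rpow_mul hlam.le]
    have hne : (1 / γ) * (-γ) = -1 := by field_simp
    rw [hne, Real.rpow_neg_one, one_div]
  have hev2 : ∀ᶠ y in atTop, 0 < 1 / (lam * y) ∧ 1 / (lam * y) ≤ f 1 := by
    have hly : Tendsto (fun y : ℝ => lam * y) atTop atTop :=
      Tendsto.const_mul_atTop hlam tendsto_id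
    have h0 : Tendsto (fun y : ℝ => 1 / (lam * y)) atTop (nhds 0) := by
      simpa [Function.comp_def, one_div, mul_inv] using tendsto_inv_atTop_zero.comp hly
    filter_upwards [hly.eventually_gt_atTop 0, h0.eventually_lt_const hf1pos] with y hy hy2
    exact ⟨by positivity, hy2.le⟩
  have hfeq : ∀ᶠ y in atTop, f (g (1 / y)) = 1 / y ∧ 1 ≤ g (1 / y) := by
    filter_upwards [hev1] with y hy
    exact ⟨(hgmem _ hy.1 hy.2).2, (hgmem _ hy.1 hy.2).1⟩
  rw [tendsto_order]
  constructor
  · -- lower bound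
    intro a ha
    rcases le_or_gt a 0 with ha0 | ha0
    · filter_upwards [hev1, hev2, hfeq] with y hy hy2 hfe
      have h1 : 1 ≤ g (1 / (lam * y)) := (hgmem _ hy2.1 hy2.2).1
      have h2 : 1 ≤ g (1 / y) := hfe.2
      have : 0 < g (1 / (lam * y)) / g (1 / y) := by positivity
      exact lt_of_le_of_lt ha0 this
    · -- 0 < a < μ
      have haγ : 1 / lam < a ^ (-γ : ℝ) := by
        rw [← hμγ]
        rw [Real.rpow_neg ha0.le, Real.rpow_neg hμpos.le]
        exact inv_strictAnti₀ (Real.rpow_pos_of_pos ha0 _)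
          (Real.rpow_lt_rpow ha0.le ha hγ)
      have hevx : ∀ᶠ x in atTop, 1 ≤ x ∧ 1 ≤ a * x ∧ 1 / lam < f (a * x) / f x := by
        have hax : Tendsto (fun x : ℝ => a * x) atTop atTop :=
          Tendsto.const_mul_atTop ha0 tendsto_id
        filter_upwards [eventually_ge_atTop 1, hax.eventually_ge_atTop 1,
          (hrv a ha0).eventually_const_lt haγ] with x h1 h2 h3
        exact ⟨h1, h2, h3⟩
      filter_upwards [hev1, hev2, hfeq, hX.eventually hevx, eventually_gt_atTop 0]
        with y hy hy2 hfe hPx hy0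
      set x := g (1 / y) with hxdef
      have hfx : f x = 1 / y := hfe.1
      have hfxpos : 0 < f x := hpos _ hPx.1
      have h3 : 1 / lam < f (a * x) / f x := hPx.2.2
      have h4 : 1 / (lam * y) < f (a * x) := by
        rw [div_lt_div_iff₀ hlam hfxpos, hfx, one_mul] at h3
        rw [div_lt_iff₀ (by positivity : (0:ℝ) < lam * y)]
        have h6 := mul_lt_mul_of_pos_right h3 hy0
        rw [one_div, inv_mul_cancel₀ (ne_of_gt hy0)] at h6
        linarith [h6, (by ring : f (a * x) * (lam * y) = f (a * x) * lam * y)]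
      have h5 : a * x < g (1 / (lam * y)) :=
        (hlt2 (a * x) hPx.2.1 _ hy2.1 hy2.2).1 h4
      have hxpos : 0 < x := lt_of_lt_of_le one_pos hPx.1
      exact (lt_div_iff₀ hxpos).2 h5
  · -- upper bound
    intro b hb
    set a' : ℝ := (μ + b) / 2 with ha'def
    have ha'μ : μ < a' := by rw [ha'def]; linarith
    have ha'b : a' < b := by rw [ha'def]; linarith
    have ha'0 : 0 < a' := lt_trans hμpos ha'μ
    have haγ : a' ^ (-γ : ℝ) < 1 / lam := by
      rw [← hμγ]
      rw [Real.rpow_neg ha'0.le, Real.rpow_neg hμpos.le]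
      exact inv_strictAnti₀ (Real.rpow_pos_of_pos hμpos _)
        (Real.rpow_lt_rpow hμpos.le ha'μ hγ)
    have hevx : ∀ᶠ x in atTop, 1 ≤ x ∧ 1 ≤ a' * x ∧ f (a' * x) / f x < 1 / lam := by
      have hax : Tendsto (fun x : ℝ => a' * x) atTop atTop :=
        Tendsto.const_mul_atTop ha'0 tendsto_id
      filter_upwards [eventually_ge_atTop 1, hax.eventually_ge_atTop 1,
        (hrv a' ha'0).eventually_lt_const haγ] with x h1 h2 h3
      exact ⟨h1, h2, h3⟩
    filter_upwards [hev1, hev2, hfeq, hX.eventually hevx, eventually_gt_atTop 0]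
      with y hy hy2 hfe hPx hy0
    set x := g (1 / y) with hxdef
    have hfx : f x = 1 / y := hfe.1
    have hfxpos : 0 < f x := hpos _ hPx.1
    have h3 : f (a' * x) / f x < 1 / lam := hPx.2.2
    have h4 : f (a' * x) < 1 / (lam * y) := by
      rw [div_lt_div_iff₀ hfxpos hlam, one_mul, hfx] at h3
      rw [lt_div_iff₀ (by positivity : (0:ℝ) < lam * y)]
      have h6 := mul_lt_mul_of_pos_right h3 hy0
      rw [one_div, inv_mul_cancel₀ (ne_of_gt hy0)] at h6
      linarith [h6, (by ring : f (a' * x) * (lam * y) = f (a' * x) * lam * y)]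
    have h5 : g (1 / (lam * y)) < a' * x :=
      (hlt (a' * x) hPx.2.1 _ hy2.1 hy2.2).1 h4
    have hxpos : 0 < x := lt_of_lt_of_le one_pos hPx.1
    have : g (1 / (lam * y)) / x < a' := (div_lt_iff₀ hxpos).2 h5
    exact lt_trans this ha'b
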